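/- For all i, j ∈ F_q and every z ∈ Z \ {e}, the number of pairs (u,v) ∈ Y_i × Y_j with uv = z equals 0 if j = −i, and equals q + 1 if j ≠ −i. -/

import Mathlib

/-- The Heisenberg group `H₃(F)` of upper unitriangular 3×3 matrices over `F`,
recorded by the three free entries: `x` in position (1,2), `y` in position (2,3),
`z` in position (1,3). -/
@[ext]
structure Heis (F : Type*) where
  x : F
  y : F
  z : F
deriving DecidableEq

namespace Heis

variable {F : Type*} [Field F]

/-- Multiplication corresponding to the matrix product. -/
instance : Group (Heis F) where
  mul a b := ⟨a.x + b.x, a.y + b.y, a.z + b.z + a.x * b.y⟩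
  one := ⟨0, 0, 0⟩
  inv a := ⟨-a.x, -a.y, -a.z + a.x * a.y⟩
  mul_assoc a b c := Heis.ext
    (show a.x + b.x + c.x = a.x + (b.x + c.x) by ring)
    (show a.y + b.y + c.y = a.y + (b.y + c.y) by ring)
    (show a.z + b.z + a.x * b.y + c.z + (a.x + b.x) * c.y
        = a.z + (b.z + c.z + b.x * c.y) + a.x * (b.y + c.y) by ring)
  one_mul a := Heis.ext
    (show (0 : F) + a.x = a.x by ring)
    (show (0 : F) + a.y = a.y by ring)
    (show (0 : F) + a.z + 0 * a.y = a.z by ring)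
  mul_one a := Heis.ext
    (show a.x + 0 = a.x by ring)
    (show a.y + 0 = a.y by ring)
    (show a.z + 0 + a.x * 0 = a.z by ring)
  inv_mul_cancel a := Heis.ext
    (show -a.x + a.x = 0 by ring)
    (show -a.y + a.y = 0 by ring)
    (show -a.z + a.x * a.y + a.z + -a.x * a.y = 0 by ring)

instance [Fintype F] : Fintype (Heis F) :=
  Fintype.ofEquiv (F × F × F)
    ⟨fun p => ⟨p.1, p.2.1, p.2.2⟩, fun a => (a.x, a.y, a.z), fun _ => rfl, fun _ => rfl⟩

end Heis

/-- The element `g(x,y,z)` of the Heisenberg group. -/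
def gElt {F : Type*} (x y z : F) : Heis F := ⟨x, y, z⟩

/-- The center `Z = {g(0,0,z) : z ∈ F}` of the Heisenberg group, as a set. -/
def Zset (F : Type*) [Field F] : Set (Heis F) := {g : Heis F | g.x = 0 ∧ g.y = 0}

/-- The center `Z` as a subgroup of the Heisenberg group. -/
def Zsub (F : Type*) [Field F] : Subgroup (Heis F) where
  carrier := Zset F
  mul_mem' := fun {a b} ha hb =>
    ⟨show a.x + b.x = 0 by rw [ha.1, hb.1, add_zero],
     show a.y + b.y = 0 by rw [ha.2, hb.2, add_zero]⟩
  one_mem' := ⟨rfl, rfl⟩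
  inv_mem' := fun {a} ha =>
    ⟨show -a.x = 0 by rw [ha.1, neg_zero],
     show -a.y = 0 by rw [ha.2, neg_zero]⟩

/-- `γ_i(α,β) = αβ/2 + (α² − εβ²)i`. -/
def gam {F : Type*} [Field F] (ε i α β : F) : F := α * β / 2 + (α ^ 2 - ε * β ^ 2) * i

/-- `Y_i = {g(α, β, γ_i(α,β)) : (α,β) ≠ (0,0)}`. -/
def Yset {F : Type*} [Field F] (ε i : F) : Set (Heis F) :=
  {g : Heis F | ∃ α β : F, (α, β) ≠ (0, 0) ∧ g = gElt α β (gam ε i α β)}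

/-- `X_i = Y_i ∪ {e}`. -/
def Xset {F : Type*} [Field F] (ε i : F) : Set (Heis F) := Yset ε i ∪ {1}

/-- The map `ρ(M) : G → G` attached to the matrix `M = [[α,β],[εβ,α]]`. -/
def rho {F : Type*} [Field F] (ε α β : F) : Heis F → Heis F := fun g =>
  gElt (α * g.x + ε * β * g.y) (β * g.x + α * g.y)
    (α * β * (g.x ^ 2 / 2 + ε * g.y ^ 2 / 2) + ε * β ^ 2 * g.x * g.y
      + (α ^ 2 - ε * β ^ 2) * g.z)

/-- `K = {ρ(M) : M = [[α,β],[εβ,α]], (α,β) ≠ (0,0)}`, as a set of maps `G → G`. -/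
def Kset {F : Type*} [Field F] (ε : F) : Set (Heis F → Heis F) :=
  {f | ∃ α β : F, (α, β) ≠ (0, 0) ∧ f = rho ε α β}

/-- The family of sets `{e}`, `Z \ {e}`, `Y_i` for `i ∈ F`. -/
def SFam {F : Type*} [Field F] (ε : F) : Set (Set (Heis F)) :=
  insert {1} (insert (Zset F \ {1}) {S | ∃ i : F, S = Yset ε i})

/-- `f` preserves each of the basic sets `{e}`, `Z \ {e}`, `Y_i`:
`hg⁻¹ ∈ S ↔ f(h)f(g)⁻¹ ∈ S`. -/
def Preserves {F : Type*} [Field F] (ε : F) (f : Heis F → Heis F) : Prop :=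
  ∀ S ∈ SFam ε, ∀ g h : Heis F, h * g⁻¹ ∈ S ↔ f h * (f g)⁻¹ ∈ S

/-- The set of permutations of `G` of the form `x ↦ σ(x)·c` with `σ ∈ K`, `c ∈ G`. -/
def Aset {F : Type*} [Field F] (ε : F) : Set (Equiv.Perm (Heis F)) :=
  {f | ∃ σ ∈ Kset ε, ∃ c : Heis F, ∀ x : Heis F, f x = σ x * c}

/-- The operation `ψ` on `F ∪ {∞}`, with `∞` encoded as `none`. -/
def psi {F : Type*} [Field F] [DecidableEq F] (ε : F) : Option F → Option F → Option F
  | none, j => j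
  | some i, none => some i
  | some i, some j => if i + j = 0 then none else some ((i * j + ε / 16) / (i + j))

/-- `Y_k` for `k ∈ F ∪ {∞}`, where `Y_∞ = Z \ {e}`. -/
def YInf {F : Type*} [Field F] (ε : F) : Option F → Set (Heis F)
  | some i => Yset ε i
  | none => Zset F \ {1}


section Statement5Aux

open Finset Polynomial

variable {F : Type*} [Field F]

@[simp] lemma gElt_x (a b c : F) : (gElt a b c).x = a := rfl
@[simp] lemma gElt_y (a b c : F) : (gElt a b c).y = b := rfl
@[simp] lemma gElt_z (a b c : F) : (gElt a b c).z = c := rfl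
@[simp] lemma heis_mul_x (a b : Heis F) : (a * b).x = a.x + b.x := rfl
@[simp] lemma heis_mul_y (a b : Heis F) : (a * b).y = a.y + b.y := rfl
@[simp] lemma heis_mul_z (a b : Heis F) : (a * b).z = a.z + b.z + a.x * b.y := rfl

lemma norm_eq_zero_iff {ε : F} (hε : ¬IsSquare ε) {α β : F} :
    α ^ 2 - ε * β ^ 2 = 0 ↔ α = 0 ∧ β = 0 := by
  constructor
  · intro h
    rcases eq_or_ne β 0 with hb | hb
    · subst hb
      refine ⟨?_, rfl⟩
      have h2 : α ^ 2 = 0 := by linear_combination h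
      exact pow_eq_zero_iff two_ne_zero |>.mp h2
    · exact absurd ⟨α / β, by field_simp; linear_combination -h⟩ hε
  · rintro ⟨rfl, rfl⟩; ring

lemma conic_exists [Fintype F] (hodd : Fintype.card F % 2 = 1) {ε : F} (hε0 : ε ≠ 0) (d : F) :
    ∃ a b : F, a ^ 2 - ε * b ^ 2 = d := by
  obtain ⟨a, b, hab⟩ := FiniteField.exists_root_sum_quadratic
    (f := X ^ 2) (g := C (-ε) * X ^ 2 + C 0 * X + C (-d)) (degree_X_pow 2)
    (degree_quadratic (neg_ne_zero.mpr hε0)) hodd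
  refine ⟨a, b, ?_⟩
  simp only [eval_add, eval_mul, eval_pow, eval_X, eval_C] at hab
  linear_combination hab

lemma conic_card [Fintype F] [DecidableEq F] (hodd : Odd (Fintype.card F)) {ε : F}
    (hε : ¬IsSquare ε) {d : F} (hd : d ≠ 0) :
    #(univ.filter fun p : F × F => p.1 ^ 2 - ε * p.2 ^ 2 = d) = Fintype.card F + 1 := by
  have hε0 : ε ≠ 0 := fun h => hε ⟨0, by rw [h]; ring⟩
  have key : ∀ d' : F, d' ≠ 0 →
      #(univ.filter fun p : F × F => p.1 ^ 2 - ε * p.2 ^ 2 = d') =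
      #(univ.filter fun p : F × F => p.1 ^ 2 - ε * p.2 ^ 2 = d) := by
    intro d' hd'
    set e := d / d' with he_def
    have he : e ≠ 0 := div_ne_zero hd hd'
    have heb : e * d' = d := div_mul_cancel₀ d hd'
    obtain ⟨a, b, hab⟩ := conic_exists (Nat.odd_iff.mp hodd) hε0 e
    refine Finset.card_nbij' (fun p => (a * p.1 + ε * b * p.2, b * p.1 + a * p.2))
      (fun q => ((a * q.1 - ε * b * q.2) / e, (a * q.2 - b * q.1) / e)) ?_ ?_ ?_ ?_
    · intro p hp
      simp only [mem_coe, mem_filter, mem_univ, true_and] at hp ⊢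
      linear_combination (a ^ 2 - ε * b ^ 2) * hp + d' * hab + heb
    · intro q hq
      simp only [mem_coe, mem_filter, mem_univ, true_and] at hq ⊢
      field_simp
      linear_combination (q.1 ^ 2 - ε * q.2 ^ 2) * hab + e * hq - e * heb
    · intro p _
      refine Prod.ext ?_ ?_ <;> simp only <;> field_simp <;> ring_nf <;>
        [linear_combination p.1 * hab; linear_combination p.2 * hab]
    · intro q _
      refine Prod.ext ?_ ?_ <;> simp only <;> field_simp <;> ring_nf <;>
        [linear_combination q.1 * hab; linear_combination q.2 * hab]
  have hmem : ∀ p : F × F, p ∈ univ.filter (fun p : F × F => p ≠ (0, 0)) →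
      (p.1 ^ 2 - ε * p.2 ^ 2) ∈ univ.filter (fun b : F => b ≠ 0) := by
    intro p hp
    simp only [mem_filter, mem_univ, true_and] at hp ⊢
    intro h
    exact hp (Prod.ext ((norm_eq_zero_iff hε).mp h).1 ((norm_eq_zero_iff hε).mp h).2)
  have hsum := Finset.card_eq_sum_card_fiberwise hmem
  have hfib : ∀ b ∈ univ.filter (fun b : F => b ≠ 0),
      #((univ.filter fun p : F × F => p ≠ (0, 0)).filter
        (fun p => p.1 ^ 2 - ε * p.2 ^ 2 = b)) =
      #(univ.filter fun p : F × F => p.1 ^ 2 - ε * p.2 ^ 2 = d) := by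
    intro b hb
    simp only [mem_filter, mem_univ, true_and] at hb
    rw [← key b hb]
    congr 1
    ext p
    simp only [mem_filter, mem_univ, true_and, and_iff_right_iff_imp]
    intro h hp0
    apply hb
    rw [← h, hp0]
    ring
  rw [Finset.sum_congr rfl hfib, Finset.sum_const, smul_eq_mul] at hsum
  have hcard1 : #(univ.filter fun p : F × F => p ≠ (0, 0)) = Fintype.card F * Fintype.card F - 1 := by
    rw [Finset.filter_ne', Finset.card_erase_of_mem (mem_univ _), Finset.card_univ,
      Fintype.card_prod]
  have hcard2 : #(univ.filter fun b : F => b ≠ 0) = Fintype.card F - 1 := by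
    rw [Finset.filter_ne', Finset.card_erase_of_mem (mem_univ _), Finset.card_univ]
  rw [hcard1, hcard2] at hsum
  have hq2 : 2 ≤ Fintype.card F := Fintype.one_lt_card
  obtain ⟨m, hm⟩ : ∃ m, Fintype.card F = m + 2 := ⟨Fintype.card F - 2, by omega⟩
  rw [hm] at hsum ⊢
  have h1 : (m + 2) * (m + 2) - 1 = (m + 1) * (m + 3) := by
    have : (m + 2) * (m + 2) = (m + 1) * (m + 3) + 1 := by ring
    omega
  have h2 : m + 2 - 1 = m + 1 := by omega
  rw [h1, h2] at hsum
  have := Nat.eq_of_mul_eq_mul_left (show 0 < m + 1 by omega) hsum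
  omega

lemma gam_sum (h2 : (2 : F) ≠ 0) (ε i j α β : F) :
    gam ε i α β + gam ε j (-α) (-β) + α * (-β) = (α ^ 2 - ε * β ^ 2) * (i + j) := by
  simp only [gam]
  field_simp
  ring

end Statement5Aux

/-- For all `i, j ∈ F_q` and every `z ∈ Z \ {e}`, the number of pairs
`(u,v) ∈ Y_i × Y_j` with `uv = z` equals `0` if `j = −i`, and `q + 1` if `j ≠ −i`. -/
theorem statement_5 {F : Type*} [Field F] [Fintype F] [DecidableEq F]
    (hodd : Odd (Fintype.card F)) (ε : F) (hε : ¬IsSquare ε)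
    (i j : F) (z : Heis F) (hz : z ∈ Zset F \ {1}) :
    Nat.card {p : Heis F × Heis F // p.1 ∈ Yset ε i ∧ p.2 ∈ Yset ε j ∧ p.1 * p.2 = z} =
      if j = -i then 0 else Fintype.card F + 1 := by
  obtain ⟨⟨hzx, hzy⟩, hz1⟩ := hz
  have hchar : ringChar F ≠ 2 := by
    intro h
    have := FiniteField.even_card_iff_char_two.mp h
    rw [Nat.odd_iff] at hodd
    omega
  have h2 : (2 : F) ≠ 0 := Ring.two_ne_zero hchar
  have hc : z.z ≠ 0 := by
    intro h
    exact hz1 (show z ∈ ({1} : Set (Heis F)) from by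
      rw [Set.mem_singleton_iff]
      exact Heis.ext hzx hzy h)
  split_ifs with hj
  · have : IsEmpty {p : Heis F × Heis F // p.1 ∈ Yset ε i ∧ p.2 ∈ Yset ε j ∧ p.1 * p.2 = z} := by
      constructor
      rintro ⟨⟨u, v⟩, ⟨α, β, hαβ, rfl⟩, ⟨α', β', hαβ', rfl⟩, huv⟩
      have hx : α + α' = 0 := by simpa [hzx] using congrArg Heis.x huv
      have hy : β + β' = 0 := by simpa [hzy] using congrArg Heis.y huv
      have hzz : gam ε i α β + gam ε j α' β' + α * β' = z.z := by
        simpa using congrArg Heis.z huv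
      apply hc
      rw [← hzz, hj]
      have hα : α' = -α := by linear_combination hx
      have hβ : β' = -β := by linear_combination hy
      subst hα hβ
      simp only [gam]
      field_simp
      ring
    exact Nat.card_of_isEmpty
  · have hij : i + j ≠ 0 := fun h => hj (by linear_combination h)
    set d := z.z / (i + j) with hd_def
    have hd : d ≠ 0 := div_ne_zero hc hij
    have hdc : d * (i + j) = z.z := div_mul_cancel₀ _ hij
    have e : {p : Heis F × Heis F // p.1 ∈ Yset ε i ∧ p.2 ∈ Yset ε j ∧ p.1 * p.2 = z} ≃
        {p : F × F // p.1 ^ 2 - ε * p.2 ^ 2 = d} := by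
      refine ⟨fun p => ⟨(p.1.1.x, p.1.1.y), ?_⟩,
        fun q => ⟨(gElt q.1.1 q.1.2 (gam ε i q.1.1 q.1.2),
          gElt (-q.1.1) (-q.1.2) (gam ε j (-q.1.1) (-q.1.2))), ?_, ?_, ?_⟩, ?_, ?_⟩
      · obtain ⟨α, β, hαβ, hu⟩ := p.2.1
        obtain ⟨α', β', hαβ', hv⟩ := p.2.2.1
        have huv := p.2.2.2
        rw [hu, hv] at huv
        have hx : α + α' = 0 := by simpa [hzx] using congrArg Heis.x huv
        have hy : β + β' = 0 := by simpa [hzy] using congrArg Heis.y huv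
        have hzz : gam ε i α β + gam ε j α' β' + α * β' = z.z := by
          simpa using congrArg Heis.z huv
        have hα : α' = -α := by linear_combination hx
        have hβ : β' = -β := by linear_combination hy
        rw [hα, hβ, gam_sum h2] at hzz
        rw [hu]
        simp only [gElt_x, gElt_y]
        rw [hd_def, eq_div_iff hij]
        exact hzz
      · refine ⟨q.1.1, q.1.2, ?_, rfl⟩
        intro h0
        apply hd
        rw [← q.2, congrArg Prod.fst h0, congrArg Prod.snd h0]
        ring
      · refine ⟨-q.1.1, -q.1.2, ?_, rfl⟩
        intro h0
        apply hd
        have ha : q.1.1 = 0 := by simpa using congrArg Prod.fst h0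
        have hb : q.1.2 = 0 := by simpa using congrArg Prod.snd h0
        rw [← q.2, ha, hb]
        ring
      · refine Heis.ext ?_ ?_ ?_
        · simp [hzx]
        · simp [hzy]
        · simp only [heis_mul_z, gElt_z, gElt_x, gElt_y]
          rw [gam_sum h2, q.2]
          exact hdc
      · intro p
        obtain ⟨α, β, hαβ, hu⟩ := p.2.1
        obtain ⟨α', β', hαβ', hv⟩ := p.2.2.1
        have huv := p.2.2.2
        rw [hu, hv] at huv
        have hx : α + α' = 0 := by simpa [hzx] using congrArg Heis.x huv
        have hy : β + β' = 0 := by simpa [hzy] using congrArg Heis.y huv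
        have hα : α' = -α := by linear_combination hx
        have hβ : β' = -β := by linear_combination hy
        apply Subtype.ext
        dsimp only
        refine Prod.ext ?_ ?_
        · rw [hu]; simp
        · rw [hu, hv]; simp [hα, hβ]
      · intro q
        apply Subtype.ext
        rfl
    rw [Nat.card_congr e, Nat.card_eq_fintype_card, Fintype.card_subtype]
    exact conic_card hodd hε hd
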